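/- Let a, b, c be real with c ≠ 0, x₀ ≠ ln|c| real, and y real with y ≠ 0. If x₀ + iy is a root of λ + cλe^{-λ} + a + be^{-λ} = 0, then ((a + 2x₀)c + b)e^{-x₀}·cos y + c(b + cx₀)e^{-2x₀} + a + x₀ = 0. -/
import Mathlib


open Complex Real

theorem stmt_13 (a b c : ℝ) (hc : c ≠ 0) (x₀ y : ℝ)
    (hx : x₀ ≠ Real.log |c|) (hy : y ≠ 0)
    (hroot :
      ((x₀ : ℂ) + Complex.I * y) +
        (c : ℂ) * ((x₀ : ℂ) + Complex.I * y) * Complex.exp (-((x₀ : ℂ) + Complex.I * y)) +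
        (a : ℂ) + (b : ℂ) * Complex.exp (-((x₀ : ℂ) + Complex.I * y)) = 0) :
    ((a + 2 * x₀) * c + b) * Real.exp (-x₀) * Real.cos y +
      c * (b + c * x₀) * Real.exp (-2 * x₀) + a + x₀ = 0 := by
  have h1 := congrArg Complex.re hroot
  have h2 := congrArg Complex.im hroot
  simp only [Complex.add_re, Complex.add_im, Complex.mul_re, Complex.mul_im,
    Complex.exp_re, Complex.exp_im, Complex.neg_re, Complex.neg_im,
    Complex.I_re, Complex.I_im, Complex.ofReal_re, Complex.ofReal_im,
    Complex.zero_re, Complex.zero_im, mul_zero, zero_mul, one_mul, mul_one,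
    zero_add, add_zero, sub_zero, zero_sub, neg_neg, Real.sin_neg, Real.cos_neg,
    mul_neg, neg_mul] at h1 h2
  have hpyth := Real.sin_sq_add_cos_sq y
  have h2exp : Real.exp (-2 * x₀) = Real.exp (-x₀) * Real.exp (-x₀) := by
    rw [← Real.exp_add]; ring_nf
  rw [h2exp]
  linear_combination (1 + c * Real.exp (-x₀) * Real.cos y) * h1 -
    c * Real.exp (-x₀) * Real.sin y * h2 -
    c * Real.exp (-x₀) ^ 2 * (c * x₀ + b) * hpyth
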